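/- Let d ≥ 1, 1 ≤ k ≤ n, and let φ be a pure state (rank-one projection onto a unit vector) on ℂ^d. Then D(φ^{⊗n}‖C_{k→n}(φ^{⊗k})) ≤ log(d[n]/d[k]). -/

import Mathlib

open scoped BigOperators Matrix Kronecker ComplexOrder
open Matrix

noncomputable section

variable {ι : Type*} [Fintype ι] [DecidableEq ι]

/-- Apply a real-scalar function to a Hermitian matrix via the spectral decomposition
(junk value `0` on non-Hermitian matrices). -/
def hermFun (f : ℝ → ℂ) (A : Matrix ι ι ℂ) : Matrix ι ι ℂ :=
  if hA : A.IsHermitian then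
    (hA.eigenvectorUnitary : Matrix ι ι ℂ) * Matrix.diagonal (fun i => f (hA.eigenvalues i)) *
      (star (hA.eigenvectorUnitary : Matrix ι ι ℂ))
  else 0

/-- Matrix logarithm (on the support; natural logarithm). -/
def matLog (A : Matrix ι ι ℂ) : Matrix ι ι ℂ := hermFun (fun x => (Real.log x : ℂ)) A

/-- Matrix square root of a Hermitian (e.g. positive semidefinite) matrix. -/
def matSqrt (A : Matrix ι ι ℂ) : Matrix ι ι ℂ := hermFun (fun x => (Real.sqrt x : ℂ)) A

/-- Complex matrix power with the Moore–Penrose convention (inverse powers taken on the support). -/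
def matCPow (A : Matrix ι ι ℂ) (z : ℂ) : Matrix ι ι ℂ :=
  hermFun (fun x => if x = 0 then 0 else (x : ℂ) ^ z) A

/-- A state (density operator). -/
def IsState (ρ : Matrix ι ι ℂ) : Prop := ρ.PosSemidef ∧ ρ.trace = 1

/-- Quantum relative entropy `D(ρ‖σ) = tr[ρ (log ρ - log σ)]`. -/
def relEnt (ρ σ : Matrix ι ι ℂ) : ℝ := ((ρ * (matLog ρ - matLog σ)).trace).re

/-- von Neumann entropy `H(ρ) = -tr[ρ log ρ]`. -/
def vnEntropy (ρ : Matrix ι ι ℂ) : ℝ := -((ρ * matLog ρ).trace).re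

/-- Trace norm `‖X‖₁ = tr √(X† X)`. -/
def traceNorm (X : Matrix ι ι ℂ) : ℝ := ((matSqrt (Xᴴ * X)).trace).re

/-- Fidelity `F(ρ,σ) = ‖√ρ √σ‖₁²`. -/
def fidelity (ρ σ : Matrix ι ι ℂ) : ℝ := (traceNorm (matSqrt ρ * matSqrt σ)) ^ 2

variable {A B : Type*} [Fintype A] [DecidableEq A] [Fintype B] [DecidableEq B]

/-- The extension `Λ ⊗ id_m` of a map on matrices. -/
def extendChan (Λ : Matrix A A ℂ →ₗ[ℂ] Matrix B B ℂ) {m : Type*} [Fintype m]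
    (M : Matrix (A × m) (A × m) ℂ) : Matrix (B × m) (B × m) ℂ :=
  fun p q => Λ (fun a a' => M (a, p.2) (a', q.2)) p.1 q.1

/-- A quantum channel: a completely positive trace-preserving linear map. -/
structure IsQChannel (Λ : Matrix A A ℂ →ₗ[ℂ] Matrix B B ℂ) : Prop where
  tp : ∀ M, (Λ M).trace = M.trace
  cp : ∀ (m : ℕ) (M : Matrix (A × Fin m) (A × Fin m) ℂ), M.PosSemidef →
    (extendChan Λ M).PosSemidef

/-- The marginal of a state of `n` systems on the `j`-th system. -/
def marginal {n : ℕ} (ρ : Matrix (Fin n → ι) (Fin n → ι) ℂ) (j : Fin n) :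
    Matrix ι ι ℂ :=
  fun a b => ∑ f : {i : Fin n // i ≠ j} → ι,
      ρ (fun i => if h : i = j then a else f ⟨i, h⟩)
        (fun i => if h : i = j then b else f ⟨i, h⟩)

/-- `n`-fold tensor power of a matrix. -/
def tpow (σ : Matrix ι ι ℂ) (n : ℕ) : Matrix (Fin n → ι) (Fin n → ι) ℂ :=
  fun f g => ∏ i, σ (f i) (g i)

/-- Partial trace over the last `n - k` tensor factors. -/
def ptraceLast {n k : ℕ} (h : k ≤ n) (ρ : Matrix (Fin n → ι) (Fin n → ι) ℂ) :
    Matrix (Fin k → ι) (Fin k → ι) ℂ :=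
  fun a b => ∑ z : Fin (n - k) → ι,
    ρ (fun i => if h' : (i : ℕ) < k then a ⟨i, h'⟩ else z ⟨(i : ℕ) - k, by have := i.isLt; omega⟩)
      (fun i => if h' : (i : ℕ) < k then b ⟨i, h'⟩ else z ⟨(i : ℕ) - k, by have := i.isLt; omega⟩)

/-- Permutation matrix acting on `(ℂ^d)^{⊗ n}`. -/
def permMat (d n : ℕ) (π : Equiv.Perm (Fin n)) :
    Matrix (Fin n → Fin d) (Fin n → Fin d) ℂ :=
  fun f g => if g = f ∘ π then 1 else 0

/-- Orthogonal projection onto the symmetric subspace of `(ℂ^d)^{⊗ n}`. -/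
def symProj (d n : ℕ) : Matrix (Fin n → Fin d) (Fin n → Fin d) ℂ :=
  ((n.factorial : ℂ))⁻¹ • ∑ π : Equiv.Perm (Fin n), permMat d n π

/-- Dimension `d[n] = C(d+n-1, n)` of the symmetric subspace. -/
def dsym (d n : ℕ) : ℕ := (d + n - 1).choose n

/-- Maximally mixed state on the symmetric subspace. -/
def piSym (d n : ℕ) : Matrix (Fin n → Fin d) (Fin n → Fin d) ℂ :=
  ((dsym d n : ℂ))⁻¹ • symProj d n

/-- Tensoring a matrix on the first `k` factors with the identity on the last `n-k` factors. -/
def extendId {d k n : ℕ} (h : k ≤ n) (M : Matrix (Fin k → Fin d) (Fin k → Fin d) ℂ) :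
    Matrix (Fin n → Fin d) (Fin n → Fin d) ℂ :=
  fun f g => (if ∀ i : Fin n, k ≤ (i : ℕ) → f i = g i then 1 else 0) *
    M (fun i => f (Fin.castLE h i)) (fun i => g (Fin.castLE h i))

/-- The universal quantum cloning machine `C_{k→n}`. -/
def uqcm (d : ℕ) {k n : ℕ} (h : k ≤ n) (ω : Matrix (Fin k → Fin d) (Fin k → Fin d) ℂ) :
    Matrix (Fin n → Fin d) (Fin n → Fin d) ℂ :=
  (((dsym d k : ℂ)) / ((dsym d n : ℂ))) •
    (symProj d n * extendId h (symProj d k * ω * symProj d k) * symProj d n)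

/-- The symmetrized partial trace channel `P_{n→k}`. -/
def symPTrace (d : ℕ) {k n : ℕ} (h : k ≤ n) (ω : Matrix (Fin n → Fin d) (Fin n → Fin d) ℂ) :
    Matrix (Fin k → Fin d) (Fin k → Fin d) ℂ :=
  symProj d k * ptraceLast h (symProj d n * ω * symProj d n) * symProj d k

/-- Orthogonal projection onto the antisymmetric subspace of `(ℂ^d)^{⊗ n}`. -/
def antiProj (d n : ℕ) : Matrix (Fin n → Fin d) (Fin n → Fin d) ℂ :=
  ((n.factorial : ℂ))⁻¹ • ∑ π : Equiv.Perm (Fin n), ((Equiv.Perm.sign π : ℤ) : ℂ) • permMat d n π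

/-- Maximally mixed state on the antisymmetric subspace. -/
def piAnti (d n : ℕ) : Matrix (Fin n → Fin d) (Fin n → Fin d) ℂ :=
  ((d.choose n : ℂ))⁻¹ • antiProj d n

/-- The antisymmetric cloning machine. -/
def antiClone (d : ℕ) {k n : ℕ} (h : k ≤ n) (ω : Matrix (Fin k → Fin d) (Fin k → Fin d) ℂ) :
    Matrix (Fin n → Fin d) (Fin n → Fin d) ℂ :=
  (((d.choose k : ℂ)) / ((d.choose n : ℂ))) •
    (antiProj d n * extendId h (antiProj d k * ω * antiProj d k) * antiProj d n)

/-- The antisymmetrized partial trace. -/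
def antiPTrace (d : ℕ) {k n : ℕ} (h : k ≤ n) (ω : Matrix (Fin n → Fin d) (Fin n → Fin d) ℂ) :
    Matrix (Fin k → Fin d) (Fin k → Fin d) ℂ :=
  antiProj d k * ptraceLast h (antiProj d n * ω * antiProj d n) * antiProj d k

/-- Rank-one projection (outer product) `|v⟩⟨v|`. -/
def outer {α : Type*} (v : α → ℂ) : Matrix α α ℂ :=
  fun x y => v x * (starRingEnd ℂ) (v y)

/-- Slater determinant vector `φ₁ ∧ ⋯ ∧ φ_k`. -/
def slater {d k : ℕ} (w : Fin k → (Fin d → ℂ)) : (Fin k → Fin d) → ℂ :=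
  fun f => ((Real.sqrt k.factorial : ℂ))⁻¹ *
    ∑ π : Equiv.Perm (Fin k), ((Equiv.Perm.sign π : ℤ) : ℂ) * ∏ i, w (π i) (f i)

/-- Partial trace over the second tensor factor. -/
def trB {ιA ιB : Type*} [Fintype ιB] (ρ : Matrix (ιA × ιB) (ιA × ιB) ℂ) : Matrix ιA ιA ℂ :=
  fun a a' => ∑ b, ρ (a, b) (a', b)

/-- Partial trace over the first tensor factor. -/
def trA {ιA ιB : Type*} [Fintype ιA] (ρ : Matrix (ιA × ιB) (ιA × ιB) ℂ) : Matrix ιB ιB ℂ :=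
  fun b b' => ∑ a, ρ (a, b) (a, b')

/-- The probability density `β(t) = (π/2)(1 + cosh(π t))⁻¹`. -/
def betaDens (t : ℝ) : ℝ := (Real.pi / 2) * (1 + Real.cosh (Real.pi * t))⁻¹

/-- Rotated Petz recovery map `R^t_{A,X}`, mapping operators on `B` to operators on `A ⊗ B`. -/
def petzA {ιA ιB : Type*} [Fintype ιA] [DecidableEq ιA] [Fintype ιB] [DecidableEq ιB]
    (t : ℝ) (X : Matrix (ιA × ιB) (ιA × ιB) ℂ) (Y : Matrix ιB ιB ℂ) :
    Matrix (ιA × ιB) (ιA × ιB) ℂ :=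
  matCPow X ((1 + t * Complex.I) / 2) *
    ((1 : Matrix ιA ιA ℂ) ⊗ₖ
      (matCPow (trA X) (-(1 + t * Complex.I) / 2) * Y * matCPow (trA X) (-(1 - t * Complex.I) / 2))) *
    matCPow X ((1 - t * Complex.I) / 2)

/-- Rotated Petz recovery map `R^t_{B,X}`, mapping operators on `A` to operators on `A ⊗ B`. -/
def petzB {ιA ιB : Type*} [Fintype ιA] [DecidableEq ιA] [Fintype ιB] [DecidableEq ιB]
    (t : ℝ) (X : Matrix (ιA × ιB) (ιA × ιB) ℂ) (Y : Matrix ιA ιA ℂ) :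
    Matrix (ιA × ιB) (ιA × ιB) ℂ :=
  matCPow X ((1 + t * Complex.I) / 2) *
    ((matCPow (trB X) (-(1 + t * Complex.I) / 2) * Y * matCPow (trB X) (-(1 - t * Complex.I) / 2)) ⊗ₖ
      (1 : Matrix ιB ιB ℂ)) *
    matCPow X ((1 - t * Complex.I) / 2)

/-- Cloning map between two general subspaces, given by their orthogonal projections. -/
def genClone {d k n : ℕ} (h : k ≤ n) (dX dY : ℕ)
    (PX : Matrix (Fin n → Fin d) (Fin n → Fin d) ℂ)
    (PY : Matrix (Fin k → Fin d) (Fin k → Fin d) ℂ)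
    (ω : Matrix (Fin k → Fin d) (Fin k → Fin d) ℂ) :
    Matrix (Fin n → Fin d) (Fin n → Fin d) ℂ :=
  (((dY : ℂ)) / ((dX : ℂ))) • (PX * extendId h (PY * ω * PY) * PX)

/-- Partial trace channel between two general subspaces. -/
def genPTrace {d k n : ℕ} (h : k ≤ n)
    (PX : Matrix (Fin n → Fin d) (Fin n → Fin d) ℂ)
    (PY : Matrix (Fin k → Fin d) (Fin k → Fin d) ℂ)
    (ω : Matrix (Fin n → Fin d) (Fin n → Fin d) ℂ) :
    Matrix (Fin k → Fin d) (Fin k → Fin d) ℂ :=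
  PY * ptraceLast h (PX * ω * PX) * PY

end

/-! ### Auxiliary lemmas for the cloning bound -/

section CloningAux

open Matrix

variable {ι' : Type*} [Fintype ι'] [DecidableEq ι']

/-- If `A` is Hermitian and `A v = c v` with `c` real, then `hermFun f A v = f c • v`. -/
lemma hermFun_mulVec_eig (f : ℝ → ℂ) (A : Matrix ι' ι' ℂ) (hA : A.IsHermitian)
    (c : ℝ) (v : ι' → ℂ) (hv : A *ᵥ v = (c : ℂ) • v) :
    hermFun f A *ᵥ v = f c • v := by
  set U : Matrix ι' ι' ℂ := (hA.eigenvectorUnitary : Matrix ι' ι' ℂ) with hU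
  have hUsU : U * star U = 1 := (Matrix.mem_unitaryGroup_iff).mp hA.eigenvectorUnitary.2
  have hsUU : star U * U = 1 := (Matrix.mem_unitaryGroup_iff').mp hA.eigenvectorUnitary.2
  set w : ι' → ℂ := star U *ᵥ v with hw
  have hUw : U *ᵥ w = v := by
    rw [hw, Matrix.mulVec_mulVec, hUsU, Matrix.one_mulVec]
  have hDw : Matrix.diagonal (RCLike.ofReal ∘ hA.eigenvalues) *ᵥ w = (c : ℂ) • w := by
    have h1 : A *ᵥ v = U *ᵥ (Matrix.diagonal (RCLike.ofReal ∘ hA.eigenvalues) *ᵥ w) := by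
      conv_lhs => rw [hA.spectral_theorem, Unitary.conjStarAlgAut_apply]
      rw [hw, ← Matrix.mulVec_mulVec, ← Matrix.mulVec_mulVec]
    have h2 := congrArg (fun x => star U *ᵥ x) (h1.symm.trans hv)
    simp only [Matrix.mulVec_mulVec, ← Matrix.mul_assoc, hsUU, Matrix.one_mul,
      Matrix.mulVec_smul] at h2
    rw [hw]
    exact h2
  have key : Matrix.diagonal (fun i => f (hA.eigenvalues i)) *ᵥ w = f c • w := by
    funext i
    have hDwi : (hA.eigenvalues i : ℂ) * w i = (c : ℂ) * w i := by
      have := congrFun hDw i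
      simpa [Matrix.mulVec_diagonal] using this
    rcases eq_or_ne (w i) 0 with h0 | h0
    · simp [Matrix.mulVec_diagonal, h0]
    · have hc : (hA.eigenvalues i : ℂ) = (c : ℂ) := mul_right_cancel₀ h0 hDwi
      have hc' : hA.eigenvalues i = c := by exact_mod_cast hc
      simp [Matrix.mulVec_diagonal, hc']
  rw [hermFun, dif_pos hA, ← hU, ← Matrix.mulVec_mulVec, ← Matrix.mulVec_mulVec, ← hw, key,
    Matrix.mulVec_smul, hUw]

/-- If `A` is a Hermitian projection, then any `f` vanishing at `0` and `1` gives
`hermFun f A = 0`. -/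
lemma hermFun_proj_eq_zero (f : ℝ → ℂ) (hf0 : f 0 = 0) (hf1 : f 1 = 0)
    (A : Matrix ι' ι' ℂ) (hA : A.IsHermitian) (hproj : A * A = A) :
    hermFun f A = 0 := by
  set U : Matrix ι' ι' ℂ := (hA.eigenvectorUnitary : Matrix ι' ι' ℂ) with hU
  have hUsU : U * star U = 1 := (Matrix.mem_unitaryGroup_iff).mp hA.eigenvectorUnitary.2
  have hsUU : star U * U = 1 := (Matrix.mem_unitaryGroup_iff').mp hA.eigenvectorUnitary.2
  set D : Matrix ι' ι' ℂ := Matrix.diagonal (RCLike.ofReal ∘ hA.eigenvalues) with hD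
  have hspec : A = U * D * star U := hA.spectral_theorem
  have hDD : D * D = D := by
    have h1 : U * (D * D) * star U = U * D * star U := by
      calc U * (D * D) * star U = (U * D * star U) * (U * D * star U) := by
            rw [Matrix.mul_assoc (U * D) (star U) (U * D * star U),
              ← Matrix.mul_assoc (star U) (U * D) (star U),
              ← Matrix.mul_assoc (star U) U D, hsUU, Matrix.one_mul]
            noncomm_ring
        _ = A := by rw [← hspec, hproj]
        _ = U * D * star U := hspec
    have h2 := congrArg (fun X => star U * X * U) h1
    calc D * D = (star U * U) * (D * D) * (star U * U) := by rw [hsUU]; noncomm_ring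
      _ = star U * (U * (D * D) * star U) * U := by noncomm_ring
      _ = star U * (U * D * star U) * U := by rw [h2]
      _ = (star U * U) * D * (star U * U) := by noncomm_ring
      _ = D := by rw [hsUU]; noncomm_ring
  have heig : ∀ i, hA.eigenvalues i = 0 ∨ hA.eigenvalues i = 1 := by
    intro i
    have h := congrFun (congrFun hDD i) i
    simp only [hD, Matrix.diagonal_mul_diagonal] at h
    rw [Matrix.diagonal_apply_eq, Matrix.diagonal_apply_eq] at h
    have h' : hA.eigenvalues i * hA.eigenvalues i = hA.eigenvalues i := by
      have h'' : ((hA.eigenvalues i : ℝ) : ℂ) * ((hA.eigenvalues i : ℝ) : ℂ)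
          = ((hA.eigenvalues i : ℝ) : ℂ) := h
      exact_mod_cast h''
    have h2 : hA.eigenvalues i * (hA.eigenvalues i - 1) = 0 := by ring_nf; linarith
    rcases mul_eq_zero.mp h2 with h3 | h3
    · exact Or.inl h3
    · exact Or.inr (by linarith)
  have hdiagz : Matrix.diagonal (fun i => f (hA.eigenvalues i)) = 0 := by
    ext i j
    rcases eq_or_ne i j with rfl | hij
    · rcases heig i with h | h <;> simp [Matrix.diagonal_apply_eq, h, hf0, hf1]
    · simp [Matrix.diagonal_apply_ne _ hij]
  rw [hermFun, dif_pos hA, hdiagz, Matrix.mul_zero, Matrix.zero_mul]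

lemma sum_mulVec' {α β : Type*} [Fintype α] [DecidableEq α] [Fintype β]
    (M : β → Matrix α α ℂ) (v : α → ℂ) :
    (∑ b, M b) *ᵥ v = ∑ b, (M b *ᵥ v) := by
  funext x
  simp [Matrix.mulVec, dotProduct, Matrix.sum_apply, Finset.sum_mul, Finset.sum_apply]
  rw [Finset.sum_comm]

/-- The tensor power vector `u^{⊗ m}`. -/
def pvec {d : ℕ} (u : Fin d → ℂ) (m : ℕ) : (Fin m → Fin d) → ℂ := fun f => ∏ i, u (f i)

lemma tpow_outer {d : ℕ} (u : Fin d → ℂ) (m : ℕ) : tpow (outer u) m = outer (pvec u m) := by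
  funext f g
  simp [tpow, outer, pvec, Finset.prod_mul_distrib, map_prod]

lemma pvec_normSq {d : ℕ} (u : Fin d → ℂ) (hu : ∑ a, Complex.normSq (u a) = 1) (m : ℕ) :
    ∑ f : Fin m → Fin d, (starRingEnd ℂ) (pvec u m f) * pvec u m f = 1 := by
  have hone : ∑ a : Fin d, ((starRingEnd ℂ) (u a) * u a) = 1 := by
    have h2 : ∑ a : Fin d, ((starRingEnd ℂ) (u a) * u a)
        = ((∑ a, Complex.normSq (u a) : ℝ) : ℂ) := by
      push_cast
      refine Finset.sum_congr rfl fun a _ => ?_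
      rw [mul_comm, Complex.mul_conj]
    rw [h2, hu]; norm_num
  calc ∑ f : Fin m → Fin d, (starRingEnd ℂ) (pvec u m f) * pvec u m f
      = ∑ f : Fin m → Fin d, ∏ i : Fin m, ((starRingEnd ℂ) (u (f i)) * u (f i)) := by
        refine Finset.sum_congr rfl fun f _ => ?_
        simp [pvec, map_prod, Finset.prod_mul_distrib]
    _ = ∏ i : Fin m, ∑ a : Fin d, ((starRingEnd ℂ) (u a) * u a) := by
        rw [Finset.prod_univ_sum]
        simp [Fintype.piFinset_univ]
    _ = 1 := by rw [Finset.prod_congr rfl fun i _ => hone]; exact Finset.prod_const_one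

lemma symProj_mulVec {d m : ℕ} (u : Fin d → ℂ) : symProj d m *ᵥ pvec u m = pvec u m := by
  have hterm : ∀ π : Equiv.Perm (Fin m), permMat d m π *ᵥ pvec u m = pvec u m := by
    intro π
    funext f
    have h1 : (permMat d m π *ᵥ pvec u m) f = pvec u m (f ∘ π) := by
      simp only [Matrix.mulVec, dotProduct, permMat, ite_mul, one_mul, zero_mul]
      rw [Finset.sum_ite_eq' Finset.univ (f ∘ π) (pvec u m)]
      simp
    rw [h1]
    show ∏ i, u ((f ∘ π) i) = ∏ i, u (f i)
    exact Equiv.prod_comp π (fun j => u (f j))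
  rw [symProj, Matrix.smul_mulVec, sum_mulVec',
    Finset.sum_congr rfl fun π _ => hterm π, Finset.sum_const, Finset.card_univ,
    Fintype.card_perm, Fintype.card_fin]
  funext f
  simp only [Pi.smul_apply, smul_eq_mul, nsmul_eq_mul, Pi.natCast_apply, Pi.mul_apply]
  rw [← mul_assoc, inv_mul_cancel₀ (by exact_mod_cast Nat.factorial_ne_zero m), one_mul]

lemma symProj_isHermitian (d m : ℕ) : (symProj d m).IsHermitian := by
  have hperm : ∀ π : Equiv.Perm (Fin m), (permMat d m π)ᴴ = permMat d m π⁻¹ := by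
    intro π
    funext f g
    simp only [Matrix.conjTranspose_apply, permMat]
    have hiff : (f = g ∘ ⇑π) ↔ (g = f ∘ ⇑π⁻¹) := by
      constructor
      · intro h
        funext j
        have h2 := congrFun h (π⁻¹ j)
        simp only [Function.comp_apply, Equiv.Perm.inv_def, Equiv.apply_symm_apply] at h2
        simp only [Function.comp_apply]
        exact h2.symm
      · intro h
        funext j
        have h2 := congrFun h (π j)
        simp only [Function.comp_apply, Equiv.Perm.inv_def, Equiv.symm_apply_apply] at h2
        simp only [Function.comp_apply]
        exact h2.symm
    by_cases h : f = g ∘ ⇑π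
    · rw [if_pos h, if_pos (hiff.mp h)]; simp
    · rw [if_neg h, if_neg (fun hc => h (hiff.mpr hc))]; simp
  unfold Matrix.IsHermitian
  rw [symProj, Matrix.conjTranspose_smul, Matrix.conjTranspose_sum]
  congr 1
  · simp
  · rw [Finset.sum_congr rfl fun π _ => hperm π]
    exact Fintype.sum_equiv (Equiv.inv (Equiv.Perm (Fin m))) _ _ (fun π => rfl)

lemma outer_isHermitian {α : Type*} (v : α → ℂ) : (outer v).IsHermitian := by
  funext f g
  simp [outer, Matrix.conjTranspose_apply, mul_comm]

lemma proj_outer_proj {α : Type*} [Fintype α] [DecidableEq α]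
    (P : Matrix α α ℂ) (hP : P.IsHermitian) (v : α → ℂ) (hv : P *ᵥ v = v) :
    P * outer v * P = outer v := by
  have h1 : P * outer v = outer v := by
    funext f g
    have h : (P * outer v) f g = (P *ᵥ v) f * (starRingEnd ℂ) (v g) := by
      calc (P * outer v) f g = ∑ z, P f z * v z * (starRingEnd ℂ) (v g) := by
            rw [Matrix.mul_apply]
            exact Finset.sum_congr rfl fun z _ => (mul_assoc _ _ _).symm
        _ = (P *ᵥ v) f * (starRingEnd ℂ) (v g) := by
            rw [← Finset.sum_mul]; rfl
    rw [h, hv]; rfl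
  have h2 : outer v * P = outer v := by
    funext f g
    have hcol : ∑ z, (starRingEnd ℂ) (v z) * P z g = (starRingEnd ℂ) (v g) := by
      have hstep : ∑ z, (starRingEnd ℂ) (v z) * P z g
          = (starRingEnd ℂ) (∑ z, v z * (starRingEnd ℂ) (P z g)) := by
        rw [map_sum]
        exact Finset.sum_congr rfl fun z _ => by rw [_root_.map_mul, Complex.conj_conj]
      rw [hstep]
      have hstep2 : ∑ z, v z * (starRingEnd ℂ) (P z g) = (P *ᵥ v) g := by
        rw [Matrix.mulVec, dotProduct]
        refine Finset.sum_congr rfl fun z _ => ?_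
        have hPz : (starRingEnd ℂ) (P z g) = P g z := by
          have h3 := congrFun (congrFun hP g) z
          rw [Matrix.conjTranspose_apply] at h3
          exact h3
        rw [hPz, mul_comm]
      rw [hstep2, hv]
    have h : (outer v * P) f g = v f * ∑ z, (starRingEnd ℂ) (v z) * P z g := by
      calc (outer v * P) f g = ∑ z, v f * ((starRingEnd ℂ) (v z) * P z g) := by
            rw [Matrix.mul_apply]
            exact Finset.sum_congr rfl fun z _ => mul_assoc _ _ _
        _ = v f * ∑ z, (starRingEnd ℂ) (v z) * P z g := (Finset.mul_sum _ _ _).symm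
    rw [h, hcol]; rfl
  rw [h1, h2]

lemma prod_castLE {k n : ℕ} (hkn : k ≤ n) (w : Fin n → ℂ) :
    ∏ j : Fin k, w (Fin.castLE hkn j)
      = ∏ i ∈ Finset.univ.filter (fun i : Fin n => (i : ℕ) < k), w i := by
  refine Finset.prod_bij' (fun j _ => Fin.castLE hkn j)
    (fun i hi => ⟨(i : ℕ), (Finset.mem_filter.mp hi).2⟩) ?_ ?_ ?_ ?_ ?_
  · intro j _; simp [Finset.mem_filter, Fin.isLt]
  · intro i hi; simp
  · intro j _; apply Fin.ext; simp
  · intro i hi; apply Fin.ext; simp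
  · intro j _; rfl

lemma extendId_outer_mulVec {d k n : ℕ} (hkn : k ≤ n) (u : Fin d → ℂ)
    (hu : ∑ a, Complex.normSq (u a) = 1) :
    extendId hkn (outer (pvec u k)) *ᵥ pvec u n = pvec u n := by
  classical
  funext f
  set e : (Fin k → Fin d) → (Fin n → Fin d) :=
    fun b i => if h : (i : ℕ) < k then b ⟨(i : ℕ), h⟩ else f i with he
  set term : (Fin n → Fin d) → ℂ := fun g =>
    extendId hkn (outer (pvec u k)) f g * pvec u n g with hterm
  have hLHS : (extendId hkn (outer (pvec u k)) *ᵥ pvec u n) f = ∑ g, term g := rfl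
  have hinj : Function.Injective e := by
    intro b b' hbb
    funext j
    have h2 := congrFun hbb (Fin.castLE hkn j)
    simp only [he] at h2
    have hj : ((Fin.castLE hkn j : Fin n) : ℕ) < k := j.isLt
    rw [dif_pos hj, dif_pos hj] at h2
    have hco : (⟨((Fin.castLE hkn j : Fin n) : ℕ), hj⟩ : Fin k) = j := by apply Fin.ext; rfl
    rwa [hco] at h2
  have hcomp : ∀ b : Fin k → Fin d, (fun j => e b (Fin.castLE hkn j)) = b := by
    intro b
    funext j
    simp only [he]
    rw [dif_pos (show ((Fin.castLE hkn j : Fin n) : ℕ) < k from j.isLt)]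
    exact congrArg b (Fin.ext rfl)
  have hcond : ∀ g : Fin n → Fin d, (∀ i : Fin n, k ≤ (i : ℕ) → f i = g i) →
      g = e (fun j => g (Fin.castLE hkn j)) := by
    intro g hg
    funext i
    simp only [he]
    by_cases h : (i : ℕ) < k
    · rw [dif_pos h]
      exact congrArg g (Fin.ext rfl)
    · rw [dif_neg h]
      exact (hg i (le_of_not_gt h)).symm
  have hzero : ∀ g ∈ Finset.univ, g ∉ Finset.univ.image e → term g = 0 := by
    intro g _ hg
    have hnc : ¬ (∀ i : Fin n, k ≤ (i : ℕ) → f i = g i) := by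
      intro hcnd
      exact hg (Finset.mem_image.mpr
        ⟨fun j => g (Fin.castLE hkn j), Finset.mem_univ _, (hcond g hcnd).symm⟩)
    simp only [hterm, extendId]
    rw [if_neg hnc, zero_mul, zero_mul]
  have hsum : ∑ g, term g = ∑ b : Fin k → Fin d, term (e b) := by
    rw [← Finset.sum_subset (Finset.subset_univ (Finset.univ.image e)) hzero]
    exact Finset.sum_image (fun b _ b' _ h => hinj h)
  set C : ℂ := ∏ i ∈ Finset.univ.filter (fun i : Fin n => ¬ (i : ℕ) < k), u (f i) with hC
  have hterm_eb : ∀ b : Fin k → Fin d,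
      term (e b) = pvec u k (fun j => f (Fin.castLE hkn j)) *
        ((starRingEnd ℂ) (pvec u k b) * pvec u k b) * C := by
    intro b
    have hind : ∀ i : Fin n, k ≤ (i : ℕ) → f i = e b i := by
      intro i hi
      simp only [he]
      rw [dif_neg (not_lt.mpr hi)]
    have hsplit : pvec u n (e b) = pvec u k b * C := by
      have hA : ∏ i ∈ Finset.univ.filter (fun i : Fin n => (i : ℕ) < k), u (e b i)
          = pvec u k b := by
        rw [← prod_castLE hkn (fun i => u (e b i))]
        refine Finset.prod_congr rfl fun j _ => ?_
        rw [congrFun (hcomp b) j]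
      have hB : ∏ i ∈ Finset.univ.filter (fun i : Fin n => ¬ (i : ℕ) < k), u (e b i) = C := by
        rw [hC]
        refine Finset.prod_congr rfl fun i hi => ?_
        have hik : ¬ (i : ℕ) < k := (Finset.mem_filter.mp hi).2
        simp only [he]
        rw [dif_neg hik]
      calc pvec u n (e b) = ∏ i : Fin n, u (e b i) := rfl
        _ = (∏ i ∈ Finset.univ.filter (fun i : Fin n => (i : ℕ) < k), u (e b i)) *
            ∏ i ∈ Finset.univ.filter (fun i : Fin n => ¬ (i : ℕ) < k), u (e b i) :=
          (Finset.prod_filter_mul_prod_filter_not Finset.univ _ _).symm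
        _ = pvec u k b * C := by rw [hA, hB]
    calc term (e b) = extendId hkn (outer (pvec u k)) f (e b) * pvec u n (e b) := rfl
      _ = outer (pvec u k) (fun j => f (Fin.castLE hkn j)) b * (pvec u k b * C) := by
          rw [hsplit]
          simp only [extendId]
          rw [if_pos hind, one_mul, hcomp b]
      _ = pvec u k (fun j => f (Fin.castLE hkn j)) *
            ((starRingEnd ℂ) (pvec u k b) * pvec u k b) * C := by
          simp only [outer]; ring
  have hfinal : ∑ b : Fin k → Fin d, term (e b) = pvec u n f := by
    rw [Finset.sum_congr rfl fun b _ => hterm_eb b]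
    have hre : ∀ b : Fin k → Fin d,
        pvec u k (fun j => f (Fin.castLE hkn j)) * ((starRingEnd ℂ) (pvec u k b) * pvec u k b) * C
        = (pvec u k (fun j => f (Fin.castLE hkn j)) * C) *
          ((starRingEnd ℂ) (pvec u k b) * pvec u k b) := fun b => by ring
    rw [Finset.sum_congr rfl fun b _ => hre b, ← Finset.mul_sum, pvec_normSq u hu k, mul_one]
    have hfc : pvec u k (fun j => f (Fin.castLE hkn j)) =
        ∏ i ∈ Finset.univ.filter (fun i : Fin n => (i : ℕ) < k), u (f i) :=
      prod_castLE hkn (fun i => u (f i))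
    rw [hfc, hC, Finset.prod_filter_mul_prod_filter_not]
    rfl
  rw [hLHS, hsum, hfinal]

lemma extendId_isHermitian' {d k n : ℕ} (hkn : k ≤ n)
    (M : Matrix (Fin k → Fin d) (Fin k → Fin d) ℂ) (hM : M.IsHermitian) :
    (extendId hkn M).IsHermitian := by
  funext f g
  simp only [Matrix.conjTranspose_apply, extendId, star_mul']
  have hsy : (∀ i : Fin n, k ≤ (i : ℕ) → g i = f i) ↔ (∀ i : Fin n, k ≤ (i : ℕ) → f i = g i) :=
    ⟨fun h i hi => (h i hi).symm, fun h i hi => (h i hi).symm⟩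
  have hMs : star (M (fun i => g (Fin.castLE hkn i)) (fun i => f (Fin.castLE hkn i)))
      = M (fun i => f (Fin.castLE hkn i)) (fun i => g (Fin.castLE hkn i)) := by
    have h3 := congrFun (congrFun hM (fun i => f (Fin.castLE hkn i)))
      (fun i => g (Fin.castLE hkn i))
    rw [Matrix.conjTranspose_apply] at h3
    exact h3
  rw [hMs]
  by_cases h : ∀ i : Fin n, k ≤ (i : ℕ) → f i = g i
  · rw [if_pos (hsy.mpr h), if_pos h, star_one]
  · rw [if_neg (fun hc => h (hsy.mp hc)), if_neg h, star_zero]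

lemma outer_mul_outer_self {α : Type*} [Fintype α] (v : α → ℂ)
    (hv : ∑ z, (starRingEnd ℂ) (v z) * v z = 1) : outer v * outer v = outer v := by
  funext f g
  calc (outer v * outer v) f g
      = ∑ z, ((starRingEnd ℂ) (v z) * v z) * (v f * (starRingEnd ℂ) (v g)) := by
        rw [Matrix.mul_apply]
        exact Finset.sum_congr rfl fun z _ => by simp only [outer]; ring
    _ = (∑ z, (starRingEnd ℂ) (v z) * v z) * (v f * (starRingEnd ℂ) (v g)) :=
        (Finset.sum_mul _ _ _).symm
    _ = outer v f g := by rw [hv, one_mul]; rfl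

lemma trace_outer_mul {α : Type*} [Fintype α] (v : α → ℂ) (B : Matrix α α ℂ) :
    (outer v * B).trace = ∑ g, (starRingEnd ℂ) (v g) * (B *ᵥ v) g := by
  calc (outer v * B).trace = ∑ f, ∑ g, (v f * (starRingEnd ℂ) (v g)) * B g f := by
        rw [Matrix.trace]
        exact Finset.sum_congr rfl fun f _ => Matrix.mul_apply
    _ = ∑ g, ∑ f, (v f * (starRingEnd ℂ) (v g)) * B g f := Finset.sum_comm
    _ = ∑ g, (starRingEnd ℂ) (v g) * ∑ f, B g f * v f := by
        refine Finset.sum_congr rfl fun g _ => ?_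
        rw [Finset.mul_sum]
        exact Finset.sum_congr rfl fun f _ => by ring
    _ = ∑ g, (starRingEnd ℂ) (v g) * (B *ᵥ v) g := rfl

end CloningAux


/-- Relative entropy bound for `k → n` universal cloning of a pure tensor-power state:
`D(φ^{⊗n} ‖ C_{k→n}(φ^{⊗k})) ≤ log(d[n]/d[k])`. -/
theorem relEnt_uqcm_pure_state_le
    (d k n : ℕ) (hd : 1 ≤ d) (hk : 1 ≤ k) (hkn : k ≤ n)
    (u : Fin d → ℂ) (hu : ∑ a, Complex.normSq (u a) = 1) :
    relEnt (tpow (outer u) n) (uqcm d hkn (tpow (outer u) k)) ≤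
      Real.log ((dsym d n : ℝ) / (dsym d k : ℝ)) := by
  classical
  set vk : (Fin k → Fin d) → ℂ := pvec u k with hvk
  set vn : (Fin n → Fin d) → ℂ := pvec u n with hvn
  have hρn : tpow (outer u) n = outer vn := tpow_outer u n
  have hρk : tpow (outer u) k = outer vk := tpow_outer u k
  have hPk := symProj_isHermitian d k
  have hPn := symProj_isHermitian d n
  have hPkv : symProj d k *ᵥ vk = vk := symProj_mulVec u
  have hPnv : symProj d n *ᵥ vn = vn := symProj_mulVec u
  have hmid : symProj d k * outer vk * symProj d k = outer vk :=
    proj_outer_proj _ hPk _ hPkv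
  have hE : (extendId hkn (outer vk)).IsHermitian :=
    extendId_isHermitian' hkn _ (outer_isHermitian _)
  have hσ_eq : uqcm d hkn (tpow (outer u) k) = ((dsym d k : ℂ) / (dsym d n : ℂ)) •
      (symProj d n * extendId hkn (outer vk) * symProj d n) := by
    rw [uqcm, hρk, hmid]
  set lam : ℝ := (dsym d k : ℝ) / (dsym d n : ℝ) with hlam
  have hσherm : (uqcm d hkn (tpow (outer u) k)).IsHermitian := by
    rw [hσ_eq]
    unfold Matrix.IsHermitian
    rw [Matrix.conjTranspose_smul, Matrix.conjTranspose_mul, Matrix.conjTranspose_mul, hPn, hE]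
    have hstar : star ((dsym d k : ℂ) / (dsym d n : ℂ)) = (dsym d k : ℂ) / (dsym d n : ℂ) := by
      simp
    rw [hstar, Matrix.mul_assoc]
  have hσv : uqcm d hkn (tpow (outer u) k) *ᵥ vn = ((lam : ℝ) : ℂ) • vn := by
    rw [hσ_eq, Matrix.smul_mulVec, ← Matrix.mulVec_mulVec, ← Matrix.mulVec_mulVec,
      hPnv, extendId_outer_mulVec hkn u hu, hPnv]
    congr 1
    rw [hlam]
    push_cast
    rfl
  have hlogσ : matLog (uqcm d hkn (tpow (outer u) k)) *ᵥ vn = ((Real.log lam : ℝ) : ℂ) • vn :=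
    hermFun_mulVec_eig _ _ hσherm lam vn hσv
  have hnormn : ∑ z, (starRingEnd ℂ) (vn z) * vn z = 1 := pvec_normSq u hu n
  have hlogρ : matLog (tpow (outer u) n) = 0 := by
    rw [hρn]
    exact hermFun_proj_eq_zero _ (by simp) (by simp)
      (outer vn) (outer_isHermitian vn) (outer_mul_outer_self vn hnormn)
  have htr : (tpow (outer u) n *
      (matLog (tpow (outer u) n) - matLog (uqcm d hkn (tpow (outer u) k)))).trace
      = -((Real.log lam : ℝ) : ℂ) := by
    rw [hlogρ, zero_sub, Matrix.mul_neg, Matrix.trace_neg, hρn, trace_outer_mul, hlogσ]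
    rw [neg_inj.mpr ?_]
    calc ∑ g, (starRingEnd ℂ) (vn g) * (((Real.log lam : ℝ) : ℂ) • vn) g
        = ((Real.log lam : ℝ) : ℂ) * ∑ g, (starRingEnd ℂ) (vn g) * vn g := by
          rw [Finset.mul_sum]
          exact Finset.sum_congr rfl fun g _ => by
            simp only [Pi.smul_apply, smul_eq_mul]; ring
      _ = ((Real.log lam : ℝ) : ℂ) := by rw [hnormn, mul_one]
  have hrel : relEnt (tpow (outer u) n) (uqcm d hkn (tpow (outer u) k)) = -Real.log lam := by
    rw [relEnt, htr]
    simp [Complex.neg_re]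
  rw [hrel, hlam, ← Real.log_inv, inv_div]
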